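/- Let Σ and T be locally compact Hausdorff spaces and q : Σ → T a continuous open surjection. For f ∈ C₀(Σ) define N_f(t) := sup{|f(σ)| : σ ∈ q⁻¹({t})}. Then N_f : T → [0, ∞) is continuous. -/

import Mathlib

open ZeroAtInfty

/-- Let `Σ` (here `M`) and `T` be locally compact Hausdorff spaces and `q : M → T` a
continuous open surjection.  For `f ∈ C₀(M)` define
`N_f(t) := sup {|f(σ)| : σ ∈ q⁻¹({t})}`.  Then `N_f : T → [0, ∞)` is continuous. -/
theorem fiberwise_sup_norm_continuous_of_isOpenMap
    {M : Type*} [TopologicalSpace M] [LocallyCompactSpace M] [T2Space M]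
    {T : Type*} [TopologicalSpace T] [LocallyCompactSpace T] [T2Space T]
    (q : M → T) (hq : Continuous q) (hqopen : IsOpenMap q)
    (hqsurj : Function.Surjective q)
    (f : C₀(M, ℂ)) :
    Continuous (fun t : T => ⨆ σ : q ⁻¹' {t}, ‖f (σ : M)‖) := by
  classical
  set N : T → ℝ := fun t => ⨆ σ : q ⁻¹' {t}, ‖f (σ : M)‖ with hN
  have hbdd : ∀ t, BddAbove (Set.range fun σ : q ⁻¹' {t} => ‖f (σ : M)‖) := by
    intro t
    refine ⟨‖f‖, ?_⟩
    rintro x ⟨σ, rfl⟩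
    calc ‖f (σ : M)‖ ≤ ‖f.toBCF‖ := f.toBCF.norm_coe_le_norm (σ : M)
      _ = ‖f‖ := ZeroAtInftyContinuousMap.norm_toBCF_eq_norm
  have hne : ∀ t, Nonempty (q ⁻¹' {t} : Set M) := fun t => by
    obtain ⟨σ, hσ⟩ := hqsurj t; exact ⟨⟨σ, hσ⟩⟩
  have hNge : ∀ (t : T) (σ : M), q σ = t → ‖f σ‖ ≤ N t := fun t σ hσ =>
    le_ciSup (hbdd t) (⟨σ, hσ⟩ : (q ⁻¹' {t} : Set M))
  have hN0 : ∀ t, 0 ≤ N t := fun t => by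
    obtain ⟨σ⟩ := hne t
    exact le_trans (norm_nonneg _) (hNge t σ σ.2)
  have hcpt : ∀ c : ℝ, 0 < c → IsCompact {σ : M | c ≤ ‖f σ‖} := by
    intro c hc
    have h1 : {σ : M | ‖f σ‖ < c} ∈ Filter.cocompact M := by
      have h2 := (zero_at_infty f : Filter.Tendsto f (Filter.cocompact M) (nhds 0))
        (Metric.ball_mem_nhds 0 hc)
      filter_upwards [h2] with σ hσ
      simpa using hσ
    obtain ⟨K, hK, hKsub⟩ := Filter.mem_cocompact.mp h1
    refine hK.of_isClosed_subset
      (isClosed_le continuous_const (continuous_norm.comp (map_continuous f))) ?_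
    intro σ hσ
    by_contra h
    have h2 := hKsub h
    simp only [Set.mem_setOf_eq] at h2 hσ
    exact absurd h2 (not_lt.mpr hσ)
  have hattain : ∀ (t : T) (c : ℝ), 0 < c → c ≤ N t → ∃ σ : M, q σ = t ∧ c ≤ ‖f σ‖ := by
    intro t c hc hcN
    obtain ⟨σ₀, hσ₀⟩ := exists_lt_of_lt_ciSup (lt_of_lt_of_le (half_lt_self hc) hcN)
    have hK' : IsCompact ((q ⁻¹' {t}) ∩ {σ : M | c / 2 ≤ ‖f σ‖}) := by
      refine (hcpt (c / 2) (by linarith)).of_isClosed_subset ?_ Set.inter_subset_right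
      exact IsClosed.inter (IsClosed.preimage hq isClosed_singleton)
        (isClosed_le continuous_const (continuous_norm.comp (map_continuous f)))
    have hK'ne : ((q ⁻¹' {t}) ∩ {σ : M | c / 2 ≤ ‖f σ‖}).Nonempty :=
      ⟨σ₀, σ₀.2, le_of_lt hσ₀⟩
    obtain ⟨σs, hσs, hmax⟩ := hK'.exists_isMaxOn hK'ne
      ((continuous_norm.comp (map_continuous f)).continuousOn)
    refine ⟨σs, hσs.1, le_trans hcN ?_⟩
    refine ciSup_le fun σ => ?_
    by_cases hcase : c / 2 ≤ ‖f (σ : M)‖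
    · exact hmax ⟨σ.2, hcase⟩
    · exact le_trans (le_of_lt (not_le.mp hcase))
        (le_trans (le_of_lt hσ₀) (hmax ⟨σ₀.2, le_of_lt hσ₀⟩))
  rw [continuous_iff_lower_upperSemicontinuous]
  constructor
  · -- lower semicontinuity
    rw [lowerSemicontinuous_iff_isOpen_preimage]
    intro c
    have heq : N ⁻¹' Set.Ioi c = q '' {σ : M | c < ‖f σ‖} := by
      ext t
      constructor
      · intro ht
        have ht' : c < N t := ht
        obtain ⟨σ, hσ⟩ := exists_lt_of_lt_ciSup ht'
        exact ⟨σ, hσ, σ.2⟩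
      · rintro ⟨σ, hσ, rfl⟩
        exact lt_of_lt_of_le hσ (hNge _ σ rfl)
    rw [heq]
    exact hqopen _ (isOpen_lt continuous_const (continuous_norm.comp (map_continuous f)))
  · -- upper semicontinuity
    rw [upperSemicontinuous_iff_isOpen_preimage]
    intro c
    rcases le_or_gt c 0 with hc | hc
    · have : N ⁻¹' Set.Iio c = ∅ := by
        ext t
        simp only [Set.mem_preimage, Set.mem_Iio, Set.mem_empty_iff_false, iff_false, not_lt]
        exact le_trans hc (hN0 t)
      rw [this]; exact isOpen_empty
    · have heq : N ⁻¹' Set.Iio c = (q '' {σ : M | c ≤ ‖f σ‖})ᶜ := by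
        ext t
        simp only [Set.mem_preimage, Set.mem_Iio, Set.mem_compl_iff, Set.mem_image,
          Set.mem_setOf_eq, not_exists]
        constructor
        · rintro ht σ ⟨hσ, rfl⟩
          exact absurd (hσ.trans (hNge _ σ rfl)) (not_le.mpr ht)
        · intro h
          by_contra hlt
          obtain ⟨σ, hσt, hσ⟩ := hattain t c hc (not_lt.mp hlt)
          exact h σ ⟨hσ, hσt⟩
      rw [heq]
      exact (((hcpt c hc).image hq).isClosed).isOpen_compl
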